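/- Define v : ℝ → ℝ by v(x) := exp(−x²/2)·π^(−1/2)·∫₀^∞ exp(−t² − 2xt)·t^(−1/2) dt. Then v is twice differentiable on ℝ and satisfies v″(x) = x²·v(x) for every real x. -/

import Mathlib

open Set Real MeasureTheory

/-- `v(x) = e^(−x²/2) · H_{−1/2}(x)` via the integral representation
`H_{−1/2}(x) = π^(−1/2) ∫₀^∞ e^(−t² − 2xt) t^(−1/2) dt`. -/
noncomputable def vFun (x : ℝ) : ℝ :=
  Real.exp (-x ^ 2 / 2) * π ^ (-(1 / 2) : ℝ) *
    ∫ t in Set.Ioi (0 : ℝ), Real.exp (-t ^ 2 - 2 * x * t) * t ^ (-(1 / 2) : ℝ)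



noncomputable def Ia (a x : ℝ) : ℝ :=
  ∫ t in Set.Ioi (0 : ℝ), Real.exp (-t ^ 2 - 2 * x * t) * t ^ a

lemma measAux (c a : ℝ) : AEStronglyMeasurable (fun t : ℝ => Real.exp (-t ^ 2 + c * t) * t ^ a)
    (volume.restrict (Ioi 0)) := by
  apply Measurable.aestronglyMeasurable
  have : Measurable fun t : ℝ => -t ^ 2 + c * t := by fun_prop
  exact (Real.measurable_exp.comp this).mul (measurable_id.pow_const a)

lemma intOn (c a : ℝ) (ha : -1 < a) :
    IntegrableOn (fun t : ℝ => Real.exp (-t ^ 2 + c * t) * t ^ a) (Ioi 0) := by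
  have hint : IntegrableOn
      (fun t : ℝ => Real.exp (c ^ 2 / 2) * (t ^ a * Real.exp (-(1/2) * t ^ 2))) (Ioi 0) :=
    (integrableOn_rpow_mul_exp_neg_mul_sq (by norm_num) ha).const_mul _
  refine hint.mono' (measAux c a) ?_
  filter_upwards [ae_restrict_mem measurableSet_Ioi] with t ht
  have ht0 : (0:ℝ) < t := ht
  have h1 : Real.exp (-t ^ 2 + c * t) ≤ Real.exp (c ^ 2 / 2) * Real.exp (-(1/2) * t ^ 2) := by
    rw [← Real.exp_add]
    apply Real.exp_le_exp.2
    nlinarith [sq_nonneg (t - c)]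
  have h2 : (0:ℝ) ≤ t ^ a := Real.rpow_nonneg ht0.le a
  rw [Real.norm_eq_abs, abs_of_nonneg (by positivity)]
  calc Real.exp (-t ^ 2 + c * t) * t ^ a
      ≤ (Real.exp (c ^ 2 / 2) * Real.exp (-(1/2) * t ^ 2)) * t ^ a := by
        exact mul_le_mul_of_nonneg_right h1 h2
    _ = Real.exp (c ^ 2 / 2) * (t ^ a * Real.exp (-(1/2) * t ^ 2)) := by ring

lemma intOn' (x a : ℝ) (ha : -1 < a) :
    IntegrableOn (fun t : ℝ => Real.exp (-t ^ 2 - 2 * x * t) * t ^ a) (Ioi 0) := by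
  have := intOn (-2 * x) a ha
  refine this.congr_fun (fun t _ => ?_) measurableSet_Ioi
  ring_nf

lemma measAux2 (x a : ℝ) :
    AEStronglyMeasurable (fun t : ℝ => (-2 * t) * (Real.exp (-t ^ 2 - 2 * x * t) * t ^ a))
      (volume.restrict (Ioi 0)) := by
  apply Measurable.aestronglyMeasurable
  have : Measurable fun t : ℝ => -t ^ 2 - 2 * x * t := by fun_prop
  exact (measurable_const.mul measurable_id).mul
    ((Real.measurable_exp.comp this).mul (measurable_id.pow_const a))

lemma measAux3 (x a : ℝ) :
    AEStronglyMeasurable (fun t : ℝ => Real.exp (-t ^ 2 - 2 * x * t) * t ^ a)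
      (volume.restrict (Ioi 0)) := by
  apply Measurable.aestronglyMeasurable
  have : Measurable fun t : ℝ => -t ^ 2 - 2 * x * t := by fun_prop
  exact (Real.measurable_exp.comp this).mul (measurable_id.pow_const a)

lemma hasDerivAt_Ia (a : ℝ) (ha : -1 < a) (x₀ : ℝ) :
    HasDerivAt (Ia a) (-2 * Ia (a + 1) x₀) x₀ := by
  have key := hasDerivAt_integral_of_dominated_loc_of_deriv_le (μ := volume.restrict (Ioi 0))
    (F := fun x t => Real.exp (-t ^ 2 - 2 * x * t) * t ^ a)
    (F' := fun x t => (-2 * t) * (Real.exp (-t ^ 2 - 2 * x * t) * t ^ a))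
    (bound := fun t => 2 * (Real.exp (-t ^ 2 + (2 * (|x₀| + 1)) * t) * t ^ (a + 1)))
    (x₀ := x₀) (Metric.ball_mem_nhds x₀ one_pos)
    (Filter.Eventually.of_forall fun x => measAux3 x a)
    (intOn' x₀ a ha)
    (measAux2 x₀ a)
    ?_ (((intOn (2 * (|x₀| + 1)) (a + 1) (by linarith)).const_mul 2)) ?_
  · -- conclude
    have h2 := key.2
    have : (∫ t in Ioi (0:ℝ), (-2 * t) * (Real.exp (-t ^ 2 - 2 * x₀ * t) * t ^ a))
        = -2 * Ia (a + 1) x₀ := by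
      rw [Ia, ← MeasureTheory.integral_const_mul]
      refine setIntegral_congr_fun measurableSet_Ioi (fun t ht => ?_)
      have ht0 : (0:ℝ) < t := ht
      rw [Real.rpow_add_one (ne_of_gt ht0)]
      ring
    rw [this] at h2
    exact h2
  · -- bound
    filter_upwards [ae_restrict_mem measurableSet_Ioi] with t ht x hx
    have ht0 : (0:ℝ) < t := ht
    have hxb : |x| ≤ |x₀| + 1 := by
      have := abs_sub_abs_le_abs_sub x x₀
      have hb : |x - x₀| < 1 := by simpa [Real.dist_eq] using hx
      linarith
    have h1 : Real.exp (-t ^ 2 - 2 * x * t) ≤ Real.exp (-t ^ 2 + (2 * (|x₀| + 1)) * t) := by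
      apply Real.exp_le_exp.2
      have : -(2 * x * t) ≤ 2 * (|x₀| + 1) * t := by
        have h2 : -x ≤ |x| := neg_le_abs x
        nlinarith
      linarith
    have h2 : (0:ℝ) ≤ t ^ a := Real.rpow_nonneg ht0.le a
    have habs : ‖(-2 : ℝ) * t * (Real.exp (-t ^ 2 - 2 * x * t) * t ^ a)‖
        = 2 * t * (Real.exp (-t ^ 2 - 2 * x * t) * t ^ a) := by
      rw [Real.norm_eq_abs, abs_mul, abs_of_nonneg (by positivity :
        (0:ℝ) ≤ Real.exp (-t ^ 2 - 2 * x * t) * t ^ a)]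
      have : |(-2 : ℝ) * t| = 2 * t := by
        rw [abs_mul]; simp [abs_of_nonneg ht0.le]
      rw [this]
    rw [habs, Real.rpow_add_one (ne_of_gt ht0)]
    calc 2 * t * (Real.exp (-t ^ 2 - 2 * x * t) * t ^ a)
        ≤ 2 * t * (Real.exp (-t ^ 2 + (2 * (|x₀| + 1)) * t) * t ^ a) := by
          apply mul_le_mul_of_nonneg_left (mul_le_mul_of_nonneg_right h1 h2) (by positivity)
      _ = 2 * (Real.exp (-t ^ 2 + 2 * (|x₀| + 1) * t) * (t ^ a * t)) := by ring
  · -- differentiability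
    filter_upwards [ae_restrict_mem measurableSet_Ioi] with t ht x hx
    have funeq : (fun x : ℝ => -t ^ 2 - 2 * x * t) = (fun x : ℝ => -t ^ 2 - x * (2 * t)) := by
      funext y; ring
    have h1 : HasDerivAt (fun x : ℝ => -t ^ 2 - 2 * x * t) (-(2 * t)) x := by
      rw [funeq]
      exact (hasDerivAt_mul_const (2 * t)).const_sub (-t ^ 2)
    have := (h1.exp).mul_const ((t:ℝ) ^ a)
    convert this using 1 <;> try rfl
    ring

lemma ode_ident (x : ℝ) :
    4 * Ia (3/2) x + 4 * x * Ia (1/2) x - Ia (-(1/2)) x = 0 := by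
  set g : ℝ → ℝ := fun t => -2 * t ^ ((1:ℝ)/2) * Real.exp (-t ^ 2 - 2 * x * t) with hg
  set g' : ℝ → ℝ := fun t =>
    4 * (Real.exp (-t ^ 2 - 2 * x * t) * t ^ ((3:ℝ)/2))
      + 4 * x * (Real.exp (-t ^ 2 - 2 * x * t) * t ^ ((1:ℝ)/2))
      - Real.exp (-t ^ 2 - 2 * x * t) * t ^ (-(1:ℝ)/2) with hg'
  have h32 : (-1:ℝ) < 3/2 := by norm_num
  have h12 : (-1:ℝ) < 1/2 := by norm_num
  have hm12 : (-1:ℝ) < -(1/2) := by norm_num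
  have hint3 := intOn' x (3/2) h32
  have hint1 := intOn' x (1/2) h12
  have hintm := intOn' x (-(1/2)) hm12
  have hintm' : IntegrableOn (fun t : ℝ => Real.exp (-t ^ 2 - 2 * x * t) * t ^ (-(1:ℝ)/2))
      (Ioi 0) := by
    have : (-(1:ℝ)/2) = (-(1/2) : ℝ) := by norm_num
    rw [this]; exact hintm
  have hg'int : IntegrableOn g' (Ioi 0) := by
    exact ((hint3.const_mul 4).add (hint1.const_mul (4 * x))).sub hintm'
  have hderiv : ∀ t ∈ Ioi (0:ℝ), HasDerivAt g (g' t) t := by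
    intro t ht
    have ht0 : (0:ℝ) < t := ht
    have h1 : HasDerivAt (fun t : ℝ => t ^ ((1:ℝ)/2)) ((1/2) * t ^ (-(1:ℝ)/2)) t := by
      have := Real.hasDerivAt_rpow_const (x := t) (p := (1:ℝ)/2) (Or.inl (ne_of_gt ht0))
      convert this using 2
      norm_num
    have h2 : HasDerivAt (fun t : ℝ => -t ^ 2 - 2 * x * t) (-2 * t - 2 * x) t := by
      have ha := ((hasDerivAt_pow 2 t).neg).sub ((hasDerivAt_id t).const_mul (2 * x))
      convert ha using 1 <;> try rfl
      norm_num
    have h3 := ((h1.const_mul (-2)).mul (h2.exp))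
    have heq : t ^ ((1:ℝ)/2) * t = t ^ ((3:ℝ)/2) := by
      rw [show ((3:ℝ)/2) = (1:ℝ)/2 + 1 by norm_num, Real.rpow_add_one (ne_of_gt ht0)]
    convert h3 using 1 <;> try rfl
    rw [hg']
    simp only []
    rw [← heq]
    ring
  have hcont : ContinuousWithinAt g (Ici 0) 0 := by
    apply ContinuousAt.continuousWithinAt
    apply ContinuousAt.mul
    · exact (continuousAt_const.mul
        (Real.continuousAt_rpow_const 0 ((1:ℝ)/2) (Or.inr (by norm_num))))
    · exact (Real.continuous_exp.comp (by continuity)).continuousAt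
  have htend : Filter.Tendsto g Filter.atTop (nhds 0) := by
    apply squeeze_zero_norm' (a := fun t : ℝ => 2 * (t ^ ((1:ℝ)/2) * Real.exp (-t)))
    · filter_upwards [Filter.eventually_ge_atTop (2 * |x| + 1)] with t ht
      have ht0 : (0:ℝ) < t := lt_of_lt_of_le (by positivity) ht
      have h1 : Real.exp (-t ^ 2 - 2 * x * t) ≤ Real.exp (-t) := by
        apply Real.exp_le_exp.2
        have hx : -x ≤ |x| := neg_le_abs x
        nlinarith [abs_nonneg x]
      have h2 : (0:ℝ) ≤ t ^ ((1:ℝ)/2) := Real.rpow_nonneg ht0.le _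
      rw [hg]
      simp only [Real.norm_eq_abs]
      rw [abs_mul, abs_mul, abs_of_nonneg h2, abs_of_nonneg (Real.exp_nonneg _)]
      have : |(-2:ℝ)| = 2 := by norm_num
      rw [this]
      calc 2 * t ^ ((1:ℝ)/2) * Real.exp (-t ^ 2 - 2 * x * t)
          ≤ 2 * t ^ ((1:ℝ)/2) * Real.exp (-t) := by
            apply mul_le_mul_of_nonneg_left h1 (by positivity)
        _ = 2 * (t ^ ((1:ℝ)/2) * Real.exp (-t)) := by ring
    · have := tendsto_rpow_mul_exp_neg_mul_atTop_nhds_zero ((1:ℝ)/2) 1 one_pos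
      have h2 := this.const_mul (2:ℝ)
      simpa using h2
  have key := MeasureTheory.integral_Ioi_of_hasDerivAt_of_tendsto hcont hderiv hg'int htend
  have hg0 : g 0 = 0 := by
    rw [hg]; simp [Real.zero_rpow (by norm_num : ((1:ℝ)/2) ≠ 0)]
  rw [hg0, sub_zero] at key
  have hsplit : ∫ t in Ioi (0:ℝ), g' t
      = 4 * Ia (3/2) x + 4 * x * Ia (1/2) x - Ia (-(1/2)) x := by
    simp only [hg']
    have hadd : IntegrableOn (fun t : ℝ => 4 * (Real.exp (-t ^ 2 - 2 * x * t) * t ^ ((3:ℝ)/2))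
        + 4 * x * (Real.exp (-t ^ 2 - 2 * x * t) * t ^ ((1:ℝ)/2))) (Ioi 0) :=
      ((hint3.const_mul 4).add (hint1.const_mul (4 * x)))
    rw [MeasureTheory.integral_sub hadd hintm',
      MeasureTheory.integral_add (hint3.const_mul 4) (hint1.const_mul (4 * x)),
      MeasureTheory.integral_const_mul, MeasureTheory.integral_const_mul]
    have e1 : ∫ t in Ioi (0:ℝ), Real.exp (-t ^ 2 - 2 * x * t) * t ^ (-(1:ℝ)/2)
        = Ia (-(1/2)) x := by
      rw [Ia]; norm_num
    rw [e1]
    simp only [Ia]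
  rw [hsplit] at key
  exact key

lemma hE (x : ℝ) : HasDerivAt (fun x : ℝ => Real.exp (-x ^ 2 / 2))
    (Real.exp (-x ^ 2 / 2) * -x) x := by
  have h1 : HasDerivAt (fun x : ℝ => -x ^ 2 / 2) (-x) x := by
    have := ((hasDerivAt_pow 2 x).neg).div_const 2
    convert this using 1 <;> try rfl
    push_cast
    ring
  exact h1.exp

lemma hvFun : vFun = fun x => Real.exp (-x ^ 2 / 2) * π ^ (-(1 / 2) : ℝ) * Ia (-(1/2)) x := rfl

noncomputable def vD (x : ℝ) : ℝ :=
  (Real.exp (-x ^ 2 / 2) * -x * π ^ (-(1 / 2) : ℝ)) * Ia (-(1/2)) x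
    + (Real.exp (-x ^ 2 / 2) * π ^ (-(1 / 2) : ℝ)) * (-2 * Ia (-(1/2) + 1) x)

/-- `v` is twice differentiable on `ℝ` and satisfies `v″ = x² v`. -/
theorem stmt10 :
    ∃ v' : ℝ → ℝ,
      (∀ x : ℝ, HasDerivAt vFun (v' x) x) ∧
      (∀ x : ℝ, HasDerivAt v' (x ^ 2 * vFun x) x) := by
  have ham : (-1 : ℝ) < -(1/2) := by norm_num
  have ham1 : (-1 : ℝ) < -(1/2) + 1 := by norm_num
  refine ⟨vD, fun x => ?_, fun x => ?_⟩
  · rw [hvFun]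
    have h2 := ((hE x).mul_const ((π:ℝ) ^ (-(1 / 2) : ℝ))).mul (hasDerivAt_Ia (-(1/2)) ham x)
    exact h2
  · have hP : HasDerivAt (fun x : ℝ => Real.exp (-x ^ 2 / 2) * -x * π ^ (-(1 / 2) : ℝ))
        ((Real.exp (-x ^ 2 / 2) * -x * -x + Real.exp (-x ^ 2 / 2) * -1) * π ^ (-(1 / 2) : ℝ)) x :=
      ((hE x).mul ((hasDerivAt_id x).neg)).mul_const _
    have hQ : HasDerivAt (fun x : ℝ => Real.exp (-x ^ 2 / 2) * π ^ (-(1 / 2) : ℝ))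
        (Real.exp (-x ^ 2 / 2) * -x * π ^ (-(1 / 2) : ℝ)) x := (hE x).mul_const _
    have hR : HasDerivAt (fun x : ℝ => -2 * Ia (-(1/2) + 1) x)
        (-2 * (-2 * Ia (-(1/2) + 1 + 1) x)) x := (hasDerivAt_Ia (-(1/2) + 1) ham1 x).const_mul _
    have h := (hP.mul (hasDerivAt_Ia (-(1/2)) ham x)).add (hQ.mul hR)
    have hfun : vD = fun x : ℝ =>
        (Real.exp (-x ^ 2 / 2) * -x * π ^ (-(1 / 2) : ℝ)) * Ia (-(1/2)) x
          + (Real.exp (-x ^ 2 / 2) * π ^ (-(1 / 2) : ℝ)) * (-2 * Ia (-(1/2) + 1) x) := rfl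
    rw [hfun]
    convert h using 1 <;> try rfl
    have e1 : (-(1/2) + 1 : ℝ) = 1/2 := by norm_num
    have e2 : (-(1/2) + 1 + 1 : ℝ) = 3/2 := by norm_num
    rw [hvFun, e2, e1]
    have hid := ode_ident x
    linear_combination (-(Real.exp (-x ^ 2 / 2) * π ^ (-(1 / 2) : ℝ))) * hid
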